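/- The diagonal entries of the Jacobian of G are ∂G_j/∂a_j = θ̂_j - θ̂_{j-1} - (r(a_j)/q_j)(1 + (a_j - μ(θ̂_j))²/μ'(θ̂_j)) - (r(a_j)/q_{j-1})(1 + (a_j - μ(θ̂_{j-1}))²/μ'(θ̂_{j-1})). -/

import Mathlib

open MeasureTheory Set

lemma aux_hasDerivAt_Iic_integral (f : ℝ → ℝ) (hf : Continuous f) (hi : Integrable f) (x : ℝ) :
    HasDerivAt (fun y => ∫ t in Iic y, f t) (f x) x := by
  have key : ∀ y, (∫ t in Iic y, f t) = (∫ t in Iic (0:ℝ), f t) + ∫ t in (0:ℝ)..y, f t := by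
    intro y
    have := intervalIntegral.integral_Iic_sub_Iic (μ := volume) (f := f) (a := (0:ℝ)) (b := y)
      hi.integrableOn hi.integrableOn
    linarith
  have hd : HasDerivAt (fun y => ∫ t in (0:ℝ)..y, f t) (f x) x :=
    intervalIntegral.integral_hasDerivAt_right (hf.intervalIntegrable _ _)
      hf.aestronglyMeasurable.stronglyMeasurableAtFilter hf.continuousAt
  have := hd.const_add (∫ t in Iic (0:ℝ), f t)
  simp only [← key] at this
  exact this

lemma aux_Iic_lt (f : ℝ → ℝ) (hf : Continuous f) (hpos : ∀ x, 0 < f x)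
    (hi : Integrable f) {x y : ℝ} (hxy : x < y) :
    (∫ t in Iic x, f t) < ∫ t in Iic y, f t := by
  have h1 := intervalIntegral.integral_Iic_sub_Iic (μ := volume) (f := f) (a := x) (b := y)
    hi.integrableOn hi.integrableOn
  have h2 := intervalIntegral.intervalIntegral_pos_of_pos (hf.intervalIntegrable x y) hpos hxy
  linarith

lemma aux_Iic_pos (f : ℝ → ℝ) (hf : Continuous f) (hpos : ∀ x, 0 < f x)
    (hi : Integrable f) (x : ℝ) : 0 < ∫ t in Iic x, f t := by
  have h0 : (0:ℝ) ≤ ∫ t in Iic (x - 1), f t :=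
    setIntegral_nonneg measurableSet_Iic fun t _ => (hpos t).le
  have := aux_Iic_lt f hf hpos hi (show x - 1 < x by linarith)
  linarith

lemma aux_Iic_lt_total (f : ℝ → ℝ) (hf : Continuous f) (hpos : ∀ x, 0 < f x)
    (hi : Integrable f) (x : ℝ) : (∫ t in Iic x, f t) < ∫ t, f t := by
  have h1 : (∫ t in Iic (x + 1), f t) ≤ ∫ t, f t :=
    setIntegral_le_integral hi (Filter.Eventually.of_forall fun t => (hpos t).le)
  have := aux_Iic_lt f hf hpos hi (show x < x + 1 by linarith)
  linarith

theorem smml_G_jacobian_diagonal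
    (n : ℕ) (hn : 1 ≤ n)
    (r : ℝ → ℝ) (hr : Continuous r) (hrpos : ∀ x, 0 < r x)
    (hint : Integrable r) (hnorm : ∫ x, r x = 1)
    (hint1 : Integrable (fun x => x * r x))
    (ψ μ dμ : ℝ → ℝ) (hψ : ∀ θ, HasDerivAt ψ (μ θ) θ)
    (hμ : ∀ θ, HasDerivAt μ (dμ θ) θ) (hdμcont : Continuous dμ) (hdμpos : ∀ θ, 0 < dμ θ)
    (μinv : ℝ → ℝ) (hinvl : ∀ θ, μinv (μ θ) = θ) (hinvr : ∀ y, μ (μinv y) = y)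
    (h : ℝ → ℝ) (hh : ∀ x, 0 < h x) (hhcont : Continuous h)
    (hinth : Integrable (fun x => r x * Real.log (h x)))
    (F : ℝ → ℝ → ℝ) (hF : ∀ x θ, F x θ = Real.exp (x * θ - ψ θ) * h x)
    (C : ℝ) (hC : C = -∫ x, r x * Real.log (h x))
    (R : ℝ → ℝ) (hR : ∀ x, R x = ∫ t in Iic x, r t)
    (Q : (ℕ → ℝ) → ℕ → ℝ)
    (hQ : ∀ b i, Q b i = (if i = n then 1 else R (b (i + 1))) - (if i = 0 then 0 else R (b i)))
    (M : (ℕ → ℝ) → ℕ → ℝ)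
    (hM : ∀ b i, M b i =
      (if i = n then ∫ t, t * r t else ∫ t in Iic (b (i + 1)), t * r t) -
      (if i = 0 then 0 else ∫ t in Iic (b i), t * r t))
    (TH : (ℕ → ℝ) → ℕ → ℝ) (hTH : ∀ b i, TH b i = μinv (M b i / Q b i))
    (I1 : (ℕ → ℝ) → ℝ)
    (hI1 : ∀ b, I1 b = C - ∑ i ∈ Finset.range (n + 1),
      Q b i * (Real.log (Q b i) + TH b i * μ (TH b i) - ψ (TH b i)))
    (a : ℕ → ℝ) (ha : ∀ i j, 1 ≤ i → i < j → j ≤ n → a i < a j)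
    (G : (ℕ → ℝ) → ℕ → ℝ)
    (hG : ∀ b j, G b j =
      (Real.log (Q b j) + b j * TH b j - ψ (TH b j)) -
      (Real.log (Q b (j - 1)) + b j * TH b (j - 1) - ψ (TH b (j - 1))))
    (j : ℕ) (hj1 : 1 ≤ j) (hj2 : j ≤ n) :
    HasDerivAt (fun t => G (Function.update a j t) j)
      (TH a j - TH a (j - 1) -
        r (a j) / Q a j * (1 + (a j - μ (TH a j)) ^ 2 / dμ (TH a j)) -
        r (a j) / Q a (j - 1) * (1 + (a j - μ (TH a (j - 1))) ^ 2 / dμ (TH a (j - 1))))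
      (a j) := by
  -- basic index facts
  have hj0 : j ≠ 0 := by omega
  have hsucc : j - 1 + 1 = j := by omega
  have hne1 : j + 1 ≠ j := by omega
  have hne2 : j - 1 ≠ j := by omega
  have hjm1n : j - 1 ≠ n := by omega
  have hcond : (j - 1 = 0) = (j = 1) := by
    apply propext; omega
  set p := a j with hp
  -- abbreviations
  set S : ℝ → ℝ := fun x => ∫ t in Iic x, t * r t with hSdef
  have hRfun : R = fun x => ∫ t in Iic x, r t := funext hR
  set A : ℝ := if j = n then 1 else R (a (j + 1)) with hA
  set B : ℝ := if j = n then ∫ t, t * r t else S (a (j + 1)) with hB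
  set c : ℝ := if j = 1 then 0 else R (a (j - 1)) with hc
  set d : ℝ := if j = 1 then 0 else S (a (j - 1)) with hd
  -- the four component formulas
  have e1 : ∀ t, Q (Function.update a j t) j = A - R t := by
    intro t
    rw [hQ]
    rw [Function.update_of_ne hne1, Function.update_self, if_neg hj0, hA]
  have e2 : ∀ t, Q (Function.update a j t) (j - 1) = R t - c := by
    intro t
    rw [hQ, hsucc, Function.update_self, Function.update_of_ne hne2, if_neg hjm1n, hc]
    by_cases hj1' : j = 1
    · simp [hj1']
    · rw [if_neg (show ¬(j - 1 = 0) by omega), if_neg hj1']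
  have e3 : ∀ t, M (Function.update a j t) j = B - S t := by
    intro t
    rw [hM]
    rw [Function.update_of_ne hne1, Function.update_self, if_neg hj0, hB, hSdef]
  have e4 : ∀ t, M (Function.update a j t) (j - 1) = S t - d := by
    intro t
    rw [hM, hsucc, Function.update_self, Function.update_of_ne hne2, if_neg hjm1n, hd]
    simp only [hSdef]
    by_cases hj1' : j = 1
    · simp [hj1']
    · rw [if_neg (show ¬(j - 1 = 0) by omega), if_neg hj1']
  have hfun : ∀ t, G (Function.update a j t) j =
      (Real.log (A - R t) + t * μinv ((B - S t) / (A - R t)) -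
        ψ (μinv ((B - S t) / (A - R t)))) -
      (Real.log (R t - c) + t * μinv ((S t - d) / (R t - c)) -
        ψ (μinv ((S t - d) / (R t - c)))) := by
    intro t
    rw [hG, hTH, hTH, e1 t, e2 t, e3 t, e4 t, Function.update_self]
  -- at the point p
  have ea : Function.update a j p = a := Function.update_eq_self j a
  have hQj : Q a j = A - R p := by have := e1 p; rwa [ea] at this
  have hQm : Q a (j - 1) = R p - c := by have := e2 p; rwa [ea] at this
  have hMj : M a j = B - S p := by have := e3 p; rwa [ea] at this
  have hMm : M a (j - 1) = S p - d := by have := e4 p; rwa [ea] at this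
  have hTHj : TH a j = μinv ((B - S p) / (A - R p)) := by rw [hTH, hQj, hMj]
  have hTHm : TH a (j - 1) = μinv ((S p - d) / (R p - c)) := by rw [hTH, hQm, hMm]
  -- positivity of the two masses
  have hqj : 0 < A - R p := by
    rw [hA]
    by_cases hjn : j = n
    · rw [if_pos hjn]
      have := aux_Iic_lt_total r hr hrpos hint p
      rw [← hR p] at this
      linarith [hnorm ▸ this]
    · rw [if_neg hjn]
      have hlt : p < a (j + 1) := ha j (j + 1) hj1 (by omega) (by omega)
      have := aux_Iic_lt r hr hrpos hint hlt
      rw [← hR p, ← hR (a (j + 1))] at this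
      linarith
  have hqm : 0 < R p - c := by
    rw [hc]
    by_cases hj1' : j = 1
    · rw [if_pos hj1']
      have := aux_Iic_pos r hr hrpos hint p
      rw [← hR p] at this
      linarith
    · rw [if_neg hj1']
      have hlt : a (j - 1) < p := ha (j - 1) j (by omega) (by omega) hj2
      have := aux_Iic_lt r hr hrpos hint hlt
      rw [← hR p, ← hR (a (j - 1))] at this
      linarith
  -- derivative of μinv
  have hμsm : StrictMono μ := by
    refine strictMono_of_deriv_pos fun x => ?_
    rw [(hμ x).deriv]; exact hdμpos x
  have hμsurj : Function.Surjective μ := fun y => ⟨μinv y, hinvr y⟩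
  have hcontinv : Continuous μinv := by
    have he : μinv = ⇑(StrictMono.orderIsoOfSurjective μ hμsm hμsurj).symm := by
      funext y
      apply (StrictMono.orderIsoOfSurjective μ hμsm hμsurj).injective
      rw [OrderIso.apply_symm_apply]
      show μ (μinv y) = y
      exact hinvr y
    rw [he]
    exact OrderIso.continuous _
  have hμinv : ∀ y, HasDerivAt μinv (dμ (μinv y))⁻¹ y := fun y =>
    HasDerivAt.of_local_left_inverse hcontinv.continuousAt (hμ (μinv y)) (hdμpos _).ne'
      (Filter.Eventually.of_forall hinvr)
  -- derivatives of R and S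
  have hRd : HasDerivAt R (r p) p := by
    rw [hRfun]; exact aux_hasDerivAt_Iic_integral r hr hint p
  have hSd : HasDerivAt S (p * r p) p :=
    aux_hasDerivAt_Iic_integral _ (continuous_id.mul hr) hint1 p
  -- chain rule assembly
  have h1 : HasDerivAt (fun t => A - R t) (-r p) p := hRd.const_sub A
  have h2 : HasDerivAt (fun t => B - S t) (-(p * r p)) p := hSd.const_sub B
  have h3 : HasDerivAt (fun t => R t - c) (r p) p := hRd.sub_const c
  have h4 : HasDerivAt (fun t => S t - d) (p * r p) p := hSd.sub_const d
  set T1 : ℝ := (dμ (μinv ((B - S p) / (A - R p))))⁻¹ *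
    ((-(p * r p) * (A - R p) - (B - S p) * (-r p)) / (A - R p) ^ 2) with hT1
  set T2 : ℝ := (dμ (μinv ((S p - d) / (R p - c))))⁻¹ *
    ((p * r p * (R p - c) - (S p - d) * (r p)) / (R p - c) ^ 2) with hT2
  have hdiv1 : HasDerivAt (fun t => (B - S t) / (A - R t))
      ((-(p * r p) * (A - R p) - (B - S p) * (-r p)) / (A - R p) ^ 2) p :=
    h2.div h1 hqj.ne'
  have hdiv2 : HasDerivAt (fun t => (S t - d) / (R t - c))
      ((p * r p * (R p - c) - (S p - d) * (r p)) / (R p - c) ^ 2) p :=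
    h4.div h3 hqm.ne'
  have hθ1 : HasDerivAt (fun t => μinv ((B - S t) / (A - R t))) T1 p := by
    have := (hμinv _).comp p hdiv1
    simpa [Function.comp_def, hT1] using this
  have hθ2 : HasDerivAt (fun t => μinv ((S t - d) / (R t - c))) T2 p := by
    have := (hμinv _).comp p hdiv2
    simpa [Function.comp_def, hT2] using this
  have hlog1 : HasDerivAt (fun t => Real.log (A - R t)) (-r p / (A - R p)) p :=
    h1.log hqj.ne'
  have hlog2 : HasDerivAt (fun t => Real.log (R t - c)) (r p / (R p - c)) p :=
    h3.log hqm.ne'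
  have hmul1 : HasDerivAt (fun t => t * μinv ((B - S t) / (A - R t)))
      (1 * μinv ((B - S p) / (A - R p)) + p * T1) p := (hasDerivAt_id p).mul hθ1
  have hmul2 : HasDerivAt (fun t => t * μinv ((S t - d) / (R t - c)))
      (1 * μinv ((S p - d) / (R p - c)) + p * T2) p := (hasDerivAt_id p).mul hθ2
  have hψ1 : HasDerivAt (fun t => ψ (μinv ((B - S t) / (A - R t))))
      (μ (μinv ((B - S p) / (A - R p))) * T1) p := by
    have := (hψ _).comp p hθ1
    simpa [Function.comp_def] using this
  have hψ2 : HasDerivAt (fun t => ψ (μinv ((S t - d) / (R t - c))))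
      (μ (μinv ((S p - d) / (R p - c))) * T2) p := by
    have := (hψ _).comp p hθ2
    simpa [Function.comp_def] using this
  have hg1 := (hlog1.add hmul1).sub hψ1
  have hg2 := (hlog2.add hmul2).sub hψ2
  have hG' := hg1.sub hg2
  rw [show (fun t => G (Function.update a j t) j) = fun t =>
      (Real.log (A - R t) + t * μinv ((B - S t) / (A - R t)) -
        ψ (μinv ((B - S t) / (A - R t)))) -
      (Real.log (R t - c) + t * μinv ((S t - d) / (R t - c)) -
        ψ (μinv ((S t - d) / (R t - c)))) from funext hfun]
  convert hG' using 1
  case e'_4 => rfl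
  case e'_5 => rfl
  case e'_8 => rfl
  rw [hTHj, hTHm, hQj, hQm, hinvr, hinvr, hT1, hT2]
  set qj := A - R p
  set qm := R p - c
  set u := B - S p
  set v := S p - d
  set X := μinv (u / qj)
  set Y := μinv (v / qm)
  have hD1 : dμ X ≠ 0 := (hdμpos X).ne'
  have hD2 : dμ Y ≠ 0 := (hdμpos Y).ne'
  field_simp
  ring
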